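/- Let u be a word over the alphabet A = A(u) of letters occurring in u, with ι(u) = m (universality index relative to A(u)). Then ζ(u) = m + 1 if and only if there exists a strict suffix x of e(u) such that ι(x·u) = m + 1 and every letter of x occurs in r(x·u); otherwise ζ(u) = m. Here ι(x·u) and r(x·u) are taken relative to the alphabet A(u), and e(u) is the word listing the letters of u in order of their first occurrence in u. -/

import Mathlib

/-- The subword universality index `ι(u)`: the largest `k` such that every word of
length `k` over the alphabet `A` is a subword (subsequence) of `u`. -/
noncomputable def univIndex {A : Type*} (u : List A) : ℕ :=
  sSup {k : ℕ | ∀ w : List A, w.length = k → w.Sublist u}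

/-- The circular subword universality index `ζ(u)`: the maximum of `ι(u')` over all
conjugates `u'` of `u` (equivalently, over all rotations of `u`). -/
noncomputable def circIndex {A : Type*} (u : List A) : ℕ :=
  (Finset.range (u.length + 1)).sup fun i => univIndex (u.drop i ++ u.take i)

open Classical in
/-- The arch-jumping function `α` of a word `w`: `α(i)` is the least `j` such that the
factor `w(i,j)` contains every letter of the alphabet `A`, undefined if no such `j` exists. -/
noncomputable def alphaJump {A : Type*} (w : List A) (i : ℕ) : Option ℕ :=
  if ∃ j, ∀ a : A, a ∈ (w.take j).drop i then
    some (sInf {j : ℕ | ∀ a : A, a ∈ (w.take j).drop i})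
  else none

/-- `αⁿ(i)`: the `n`-fold iteration of the arch-jumping function `α` of `w`, starting
from position `i`; `none` if some intermediate step is undefined. -/
noncomputable def alphaIter {A : Type*} (w : List A) (n i : ℕ) : Option ℕ :=
  (fun o => o.bind (alphaJump w))^[n] (some i)

/-- The number of arches in the arch factorization of `w`:
the largest `n` such that `αⁿ(0)` is defined. -/
noncomputable def numArches {A : Type*} (w : List A) : ℕ :=
  sSup {n : ℕ | (alphaIter w n 0).isSome}

/-- The rest `r(w)` of the arch factorization of `w`: the suffix of `w` remaining after
its arches, i.e. after position `α^m(0)` where `m` is the number of arches. -/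
noncomputable def archRest {A : Type*} (w : List A) : List A :=
  w.drop ((alphaIter w (numArches w) 0).getD 0)

/-- `e(u)`: the word listing the letters of `u` in the order of their first occurrence in `u`. -/
def eWord {A : Type*} [DecidableEq A] (u : List A) : List A :=
  (u.reverse.dedup).reverse



section Aux
variable {A : Type*}

/-- Richness of the factor w[p, q). -/
def RichF (w : List A) (p q : ℕ) : Prop := ∀ a : A, a ∈ (w.take q).drop p

lemma richF_mono_right {w : List A} {p q q' : ℕ} (h : RichF w p q) (hq : q ≤ q') :
    RichF w p q' := by
  intro a
  have := h a
  have hsub : ((w.take q).drop p).Sublist ((w.take q').drop p) := by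
    rw [List.drop_take, List.drop_take]
    exact List.take_sublist_take_left (by omega)
  exact hsub.mem this

lemma richF_mono_left {w : List A} {p p' q : ℕ} (h : RichF w p' q) (hp : p ≤ p') :
    RichF w p q := by
  intro a
  have := h a
  have : a ∈ ((w.take q).drop p).drop (p' - p) := by
    rwa [List.drop_drop, Nat.add_sub_cancel' hp]
  exact (List.drop_sublist _ _).mem this

lemma aj_eq_some_of {w : List A} {p j : ℕ} (h : RichF w p j) :
    alphaJump w p = some (sInf {j : ℕ | RichF w p j}) := by
  rw [alphaJump, if_pos ⟨j, h⟩]; rfl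

lemma aj_spec {w : List A} {p q : ℕ} (h : alphaJump w p = some q) :
    RichF w p q ∧ ∀ j, RichF w p j → q ≤ j := by
  rw [alphaJump] at h
  split_ifs at h with hex
  · obtain ⟨j, hj⟩ := hex
    have hq : q = sInf {j : ℕ | RichF w p j} := by
      simpa [RichF] using (Option.some_injective _ h).symm
    subst hq
    exact ⟨Nat.sInf_mem (⟨j, hj⟩ : Set.Nonempty {j : ℕ | RichF w p j}),
      fun j hj' => Nat.sInf_le hj'⟩

lemma aj_isSome_of {w : List A} {p j : ℕ} (h : RichF w p j) :
    (alphaJump w p).isSome := by rw [aj_eq_some_of h]; rfl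

lemma aj_lt [Nonempty A] {w : List A} {p q : ℕ} (h : alphaJump w p = some q) : p < q := by
  obtain ⟨h1, -⟩ := aj_spec h
  obtain ⟨a⟩ := ‹Nonempty A›
  have := h1 a
  have hne : (w.take q).drop p ≠ [] := fun he => by simp [he] at this
  have : p < (w.take q).length := by
    by_contra hc
    exact hne (List.drop_eq_nil_of_le (by omega))
  simp only [List.length_take] at this
  omega

lemma aj_le_len {w : List A} {p q : ℕ} (h : alphaJump w p = some q) : q ≤ w.length := by
  obtain ⟨h1, h2⟩ := aj_spec h
  refine h2 _ (fun a => ?_)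
  have := h1 a
  rw [List.drop_take] at this ⊢
  have h3 : a ∈ w.drop p := (List.take_sublist _ _).mem this
  rwa [List.take_of_length_le (by simp)]

lemma aj_le_of_rich {w : List A} {p s e : ℕ} (h : RichF w s e) (hps : p ≤ s) :
    ∃ q, alphaJump w p = some q ∧ q ≤ e := by
  have h' : RichF w p e := richF_mono_left h hps
  refine ⟨_, aj_eq_some_of h', (aj_spec (aj_eq_some_of h')).2 _ h'⟩

end Aux


local infixl:50 " <+ " => List.Sublist

section Iter
variable {A : Type*}

lemma iter_zero (w : List A) (i : ℕ) : alphaIter w 0 i = some i := rfl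

lemma iter_succ (w : List A) (n i : ℕ) :
    alphaIter w (n+1) i = (alphaIter w n i).bind (alphaJump w) :=
  Function.iterate_succ_apply' _ _ _

lemma iter_none (w : List A) (n : ℕ) :
    (fun o : Option ℕ => o.bind (alphaJump w))^[n] none = none := by
  induction n with
  | zero => rfl
  | succ n ih => rw [Function.iterate_succ_apply', ih]; rfl

lemma iter_succ_front {w : List A} {i q : ℕ} (h : alphaJump w i = some q) (n : ℕ) :
    alphaIter w (n+1) i = alphaIter w n q := by
  rw [alphaIter, Function.iterate_succ_apply]
  show (fun o : Option ℕ => o.bind (alphaJump w))^[n] ((some i).bind (alphaJump w)) = _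
  rw [Option.bind_some, h]; rfl

lemma iter_succ_front_none {w : List A} {i : ℕ} (h : alphaJump w i = none) (n : ℕ) :
    alphaIter w (n+1) i = none := by
  rw [alphaIter, Function.iterate_succ_apply]
  show (fun o : Option ℕ => o.bind (alphaJump w))^[n] ((some i).bind (alphaJump w)) = _
  rw [Option.bind_some, h, iter_none]

lemma iter_add {w : List A} {a i q : ℕ} (h : alphaIter w a i = some q) (b : ℕ) :
    alphaIter w (a + b) i = alphaIter w b q := by
  rw [alphaIter, Nat.add_comm, Function.iterate_add_apply]
  show (fun o : Option ℕ => o.bind (alphaJump w))^[b] (alphaIter w a i) = _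
  rw [h]; rfl

lemma iter_le_some {w : List A} {n i q : ℕ} (h : alphaIter w n i = some q) {j : ℕ}
    (hj : j ≤ n) : ∃ q', alphaIter w j i = some q' := by
  rcases Nat.exists_eq_add_of_le hj with ⟨c, rfl⟩
  cases hq' : alphaIter w j i with
  | some q' => exact ⟨q', rfl⟩
  | none =>
      exfalso
      rw [alphaIter, Nat.add_comm, Function.iterate_add_apply] at h
      change (fun o : Option ℕ => o.bind (alphaJump w))^[c] (alphaIter w j i) = _ at h
      rw [hq', iter_none] at h
      cases h

lemma iter_mono_pos [Nonempty A] {w : List A} {n i q : ℕ}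
    (h : alphaIter w n i = some q) : i + n ≤ q := by
  induction n generalizing q with
  | zero => rw [iter_zero] at h; injection h with h; omega
  | succ n ih =>
      rw [iter_succ] at h
      obtain ⟨q', hq', haj⟩ := Option.bind_eq_some_iff.mp h
      have h1 := ih hq'
      have h2 := aj_lt haj
      omega

lemma iter_le_len {w : List A} {n i q : ℕ} (hi : i ≤ w.length)
    (h : alphaIter w n i = some q) : q ≤ w.length := by
  cases n with
  | zero => rw [iter_zero] at h; injection h with h; omega
  | succ n =>
      rw [iter_succ] at h
      obtain ⟨q', hq', haj⟩ := Option.bind_eq_some_iff.mp h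
      exact aj_le_len haj

lemma drop_split {w : List A} {p t : ℕ} (h : p ≤ t) :
    w.drop p = (w.take t).drop p ++ w.drop t := by
  rcases le_or_gt p w.length with hp | hp
  · conv_lhs => rw [← List.take_append_drop t w]
    rw [List.drop_append_of_le_length (by simp [List.length_take]; omega)]
  · have h1 : w.drop p = ([] : List A) := List.drop_eq_nil_of_le (by omega)
    have h2 : w.drop t = ([] : List A) := List.drop_eq_nil_of_le (by omega)
    have h3 : (w.take t).drop p = ([] : List A) :=
      List.drop_eq_nil_of_le (by simp [List.length_take]; omega)
    simp [h1, h2, h3]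

lemma take_drop_split {w : List A} {p q₁ q : ℕ} (h1 : p ≤ q₁) (h2 : q₁ ≤ q) :
    (w.take q).drop p = (w.take q₁).drop p ++ (w.take q).drop q₁ := by
  have := drop_split (w := w.take q) h1
  rwa [List.take_take, min_eq_left h2] at this

lemma sublist_tail_of_cons {a c : A} {z Y : List A} (h : (a :: z) <+ (c :: Y)) : z <+ Y := by
  cases h with
  | cons _ h => exact (List.sublist_cons_self a z).trans h
  | cons_cons => assumption

lemma cons_sublist_right_of_not_mem {a : A} {z X Y : List A}
    (h : (a :: z) <+ (X ++ Y)) (ha : a ∉ X) : (a :: z) <+ Y := by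
  obtain ⟨z₁, z₂, he, h1, h2⟩ := List.sublist_append_iff.mp h
  cases z₁ with
  | nil => rw [List.nil_append] at he; rwa [he]
  | cons b z₁' =>
      exfalso
      rw [List.cons_append] at he
      injection he with hab _
      exact ha (h1.subset (by simp [hab]))

lemma univ_to_arch [Nonempty A] {w : List A} :
    ∀ k p, (∀ z : List A, z.length = k → z <+ w.drop p) → (alphaIter w k p).isSome := by
  intro k
  induction k with
  | zero => intro p _; rfl
  | succ k ih =>
      intro p hp
      have hrich : RichF w p w.length := by
        intro a
        have h1 : (List.replicate (k+1) a) <+ w.drop p := hp _ (by simp)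
        have ha : a ∈ w.drop p := h1.subset (by simp)
        rwa [List.take_length]
      have hsome := aj_eq_some_of hrich
      set q₁ := sInf {j | RichF w p j} with hq₁
      have spec := aj_spec hsome
      have hpq : p < q₁ := aj_lt hsome
      have hqlen : q₁ ≤ w.length := aj_le_len hsome
      have hnr : ¬ RichF w p (q₁ - 1) := fun hc => by have := spec.2 _ hc; omega
      rw [RichF] at hnr; push_neg at hnr
      obtain ⟨a, ha⟩ := hnr
      have hnext : ∀ z : List A, z.length = k → z <+ w.drop q₁ := by
        intro z hz
        have haz : (a :: z) <+ w.drop p := hp _ (by simp [hz])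
        rw [drop_split (show p ≤ q₁ - 1 by omega)] at haz
        have haz2 : (a :: z) <+ w.drop (q₁ - 1) := cons_sublist_right_of_not_mem haz ha
        have hlt : q₁ - 1 < w.length := by omega
        rw [List.drop_eq_getElem_cons hlt] at haz2
        have h3 := sublist_tail_of_cons haz2
        have hq : q₁ - 1 + 1 = q₁ := by omega
        rwa [hq] at h3
      rw [iter_succ_front hsome]
      exact ih q₁ hnext

lemma arch_to_univ [Nonempty A] {w : List A} :
    ∀ n p q, alphaIter w n p = some q → ∀ z : List A, z.length ≤ n →
      z <+ (w.take q).drop p := by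
  intro n
  induction n with
  | zero =>
      intro p q h z hz
      rw [iter_zero] at h; injection h with h
      have hz0 : z = [] := List.length_eq_zero_iff.mp (Nat.le_zero.mp hz)
      simp [hz0]
  | succ n ih =>
      intro p q h z hz
      cases haj : alphaJump w p with
      | none => rw [iter_succ_front_none haj] at h; cases h
      | some q₁ =>
          rw [iter_succ_front haj] at h
          have hq₁q : q₁ + n ≤ q := iter_mono_pos h
          have hpq₁ : p < q₁ := aj_lt haj
          cases z with
          | nil => exact List.nil_sublist _
          | cons a z' =>
              rw [take_drop_split (w := w) (le_of_lt hpq₁) (by omega : q₁ ≤ q)]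
              have h1 : [a] <+ (w.take q₁).drop p :=
                List.singleton_sublist.mpr ((aj_spec haj).1 a)
              have h2 : z' <+ (w.take q).drop q₁ :=
                ih q₁ q h z' (by simpa using Nat.succ_le_succ_iff.mp hz)
              exact h1.append h2

lemma take_drop_sublist_drop (w : List A) (p q : ℕ) : ((w.take q).drop p) <+ w.drop p := by
  rw [List.drop_take]
  exact List.take_sublist _ _

lemma arch_to_univ' [Nonempty A] {w : List A} {n p q : ℕ} (h : alphaIter w n p = some q)
    {z : List A} (hz : z.length ≤ n) : z <+ w.drop p :=
  (arch_to_univ n p q h z hz).trans (take_drop_sublist_drop w p q)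

end Iter

section Univ
variable {A : Type*} [Nonempty A]

lemma univSet_bdd (w : List A) : BddAbove {k : ℕ | ∀ z : List A, z.length = k → z <+ w} := by
  refine ⟨w.length, fun k hk => ?_⟩
  obtain ⟨a⟩ := ‹Nonempty A›
  have := hk (List.replicate k a) (by simp)
  simpa using this.length_le

lemma univSet_zero (w : List A) : ∀ z : List A, z.length = 0 → z <+ w := by
  intro z hz
  rw [List.length_eq_zero_iff.mp hz]
  exact List.nil_sublist _

lemma univSet_mem_of_le {w : List A} {j k : ℕ}
    (hj : ∀ z : List A, z.length = j → z <+ w) (hk : k ≤ j) :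
    ∀ z : List A, z.length = k → z <+ w := by
  intro z hz
  obtain ⟨a⟩ := ‹Nonempty A›
  have h1 := hj (z ++ List.replicate (j - k) a) (by simp [hz]; omega)
  exact (List.sublist_append_left z _).trans h1

lemma le_univIndex_iff {w : List A} {k : ℕ} :
    k ≤ univIndex w ↔ ∀ z : List A, z.length = k → z <+ w := by
  constructor
  · intro h
    have hmem : univIndex w ∈ {k : ℕ | ∀ z : List A, z.length = k → z <+ w} :=
      Nat.sSup_mem ⟨0, univSet_zero w⟩ (univSet_bdd w)
    exact univSet_mem_of_le hmem h
  · intro h; exact le_csSup (univSet_bdd w) h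

lemma univIndex_mono {v w : List A} (h : v <+ w) : univIndex v ≤ univIndex w :=
  le_univIndex_iff.mpr fun z hz => (le_univIndex_iff.mp le_rfl z hz).trans h

lemma numArches_spec (w : List A) :
    (alphaIter w (numArches w) 0).isSome ∧
      ∀ n, (alphaIter w n 0).isSome → n ≤ numArches w := by
  have hbdd : BddAbove {n : ℕ | (alphaIter w n 0).isSome} := by
    refine ⟨w.length, fun n hn => ?_⟩
    obtain ⟨q, hq⟩ := Option.isSome_iff_exists.mp hn
    have h1 := iter_mono_pos hq
    have h2 := iter_le_len (Nat.zero_le _) hq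
    omega
  have h0 : 0 ∈ {n : ℕ | (alphaIter w n 0).isSome} := by
    simp only [Set.mem_setOf_eq, iter_zero]; rfl
  exact ⟨Nat.sSup_mem ⟨0, h0⟩ hbdd, fun n hn => le_csSup hbdd hn⟩

lemma numArches_eq_univIndex (w : List A) : numArches w = univIndex w := by
  obtain ⟨hsome, hmax⟩ := numArches_spec w
  obtain ⟨q, hq⟩ := Option.isSome_iff_exists.mp hsome
  apply le_antisymm
  · rw [le_univIndex_iff]
    intro z hz
    have := arch_to_univ' hq (le_of_eq hz)
    simpa using this
  · refine hmax _ (univ_to_arch _ 0 fun z hz => ?_)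
    rw [List.drop_zero]
    exact le_univIndex_iff.mp le_rfl z hz

end Univ

section Greedy
variable {A : Type*}

lemma mem_drop_mono {a : A} {w : List A} {t' t : ℕ} (h : t' ≤ t) (ha : a ∈ w.drop t) :
    a ∈ w.drop t' := by
  have : w.drop t = (w.drop t').drop (t - t') := by
    rw [List.drop_drop]; congr 1; omega
  rw [this] at ha
  exact (List.drop_sublist _ _).subset ha

lemma drop_append_ge {x u : List A} {n : ℕ} (h : x.length ≤ n) :
    (x ++ u).drop n = u.drop (n - x.length) := by
  have : n = x.length + (n - x.length) := by omega
  rw [this, List.drop_length_add_append]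
  congr 1; omega

lemma take_append_ge {x u : List A} {n : ℕ} (h : x.length ≤ n) :
    (x ++ u).take n = x ++ u.take (n - x.length) := by
  have : n = x.length + (n - x.length) := by omega
  rw [this, List.take_length_add_append]
  congr 2; omega

lemma greedy_le [Nonempty A] {V V' : List A} {n : ℕ}
    (hV : (alphaIter V n 0).isSome) :
    ∃ q qv, alphaIter (V ++ V') n 0 = some q ∧ alphaIter V n 0 = some qv ∧ q ≤ qv := by
  induction n with
  | zero => exact ⟨0, 0, rfl, rfl, le_rfl⟩
  | succ n ih =>
      have hVn : (alphaIter V n 0).isSome := by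
        obtain ⟨qq, hqq⟩ := Option.isSome_iff_exists.mp hV
        obtain ⟨q', hq'⟩ := iter_le_some hqq (Nat.le_succ n)
        simp [hq']
      obtain ⟨q, qv, hq, hqv, hle⟩ := ih hVn
      obtain ⟨qv', hqv'⟩ := Option.isSome_iff_exists.mp hV
      have hstep : alphaJump V qv = some qv' := by
        rw [iter_succ, hqv, Option.bind_some] at hqv'; exact hqv'
      have hrichV : RichF V qv qv' := (aj_spec hstep).1
      have hqv'len : qv' ≤ V.length := aj_le_len hstep
      have hrichW : RichF (V ++ V') qv qv' := by
        intro a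
        have := hrichV a
        rwa [List.take_append_of_le_length hqv'len]
      obtain ⟨q', hq', hq'le⟩ := aj_le_of_rich hrichW hle
      refine ⟨q', qv', ?_, hqv', hq'le⟩
      rw [iter_succ, hq, Option.bind_some]; exact hq'

lemma card_le_length [Fintype A] [DecidableEq A] {l : List A} (h : ∀ a : A, a ∈ l) :
    Fintype.card A ≤ l.length := by
  have hsub : (Finset.univ : Finset A) ⊆ l.toFinset := fun a _ => List.mem_toFinset.mpr (h a)
  calc Fintype.card A = (Finset.univ : Finset A).card := rfl
    _ ≤ l.toFinset.card := Finset.card_le_card hsub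
    _ ≤ l.length := l.toFinset_card_le

lemma univIndex_prepend_le [Fintype A] [DecidableEq A] [Nonempty A] {x u : List A}
    (hx : x.length ≤ Fintype.card A) :
    univIndex (x ++ u) ≤ univIndex u + 1 := by
  set w := x ++ u with hw
  set K := univIndex w with hK
  rcases Nat.eq_zero_or_pos K with h0 | hpos
  · omega
  · have hU : ∀ z : List A, z.length = K → z.Sublist w :=
      fun z hz => le_univIndex_iff.mp le_rfl z hz
    have hsome := univ_to_arch K 0 (by simpa using hU)
    obtain ⟨Q, hQ⟩ := Option.isSome_iff_exists.mp hsome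
    obtain ⟨q₁, hq₁⟩ := iter_le_some hQ (show 1 ≤ K from hpos)
    have haj : alphaJump w 0 = some q₁ := by
      rw [iter_succ, iter_zero, Option.bind_some] at hq₁; exact hq₁
    have hrest : alphaIter w (K - 1) q₁ = some Q := by
      have h2 := iter_add hq₁ (K - 1)
      rw [show 1 + (K - 1) = K by omega, hQ] at h2
      exact h2.symm
    have hXle : x.length ≤ q₁ := by
      have hr : RichF w 0 q₁ := (aj_spec haj).1
      have hall : ∀ a : A, a ∈ w.take q₁ := by
        intro a; have := hr a; simpa using this
      have hcard := card_le_length hall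
      have : (w.take q₁).length ≤ q₁ := by simp [List.length_take]
      omega
    have hdropw : w.drop q₁ = u.drop (q₁ - x.length) := drop_append_ge hXle
    have h2 : K - 1 ≤ univIndex u := by
      rw [le_univIndex_iff]
      intro z hz
      have h3 := arch_to_univ' hrest (le_of_eq hz)
      rw [hdropw] at h3
      exact h3.trans (List.drop_sublist _ _)
    omega
end Greedy

section EW
variable {A : Type*} [DecidableEq A]

lemma eWord_nodup (u : List A) : (eWord u).Nodup := by
  rw [eWord]; exact List.nodup_reverse.mpr (List.nodup_dedup _)

lemma mem_eWord {a : A} {u : List A} : a ∈ eWord u ↔ a ∈ u := by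
  rw [eWord]; simp [List.mem_dedup]

lemma eWord_length [Fintype A] {u : List A} (hA : ∀ a : A, a ∈ u) :
    (eWord u).length = Fintype.card A := by
  apply le_antisymm
  · calc (eWord u).length = (eWord u).toFinset.card :=
          (List.toFinset_card_of_nodup (eWord_nodup u)).symm
      _ ≤ Fintype.card A := Finset.card_le_univ _
  · exact card_le_length fun a => mem_eWord.mpr (hA a)

lemma dedup_order :
    ∀ (v : List A) (m₁ m₂ : List A) (b a : A), v.dedup = m₁ ++ b :: m₂ → a ∈ m₂ →
      ∀ E, b ∈ v.drop E → a ∈ v.drop E := by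
  intro v
  induction v with
  | nil =>
      intro m₁ m₂ b a h ha E hb
      rw [List.dedup_nil] at h
      exact absurd h.symm (by simp)
  | cons c v' ih =>
      intro m₁ m₂ b a h ha E hb
      by_cases hm : c ∈ v'
      · rw [List.dedup_cons_of_mem hm] at h
        cases E with
        | zero =>
            have ha' : a ∈ v'.dedup := by rw [h]; simp [ha]
            simp [List.mem_dedup.mp ha']
        | succ E' =>
            have hb' : b ∈ v'.drop E' := by rwa [List.drop_succ_cons] at hb
            have := ih m₁ m₂ b a h ha E' hb'
            rwa [List.drop_succ_cons]
      · rw [List.dedup_cons_of_notMem hm] at h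
        cases m₁ with
        | nil =>
            rw [List.nil_append] at h
            injection h with hcb hm₂
            cases E with
            | zero =>
                have ha' : a ∈ v' := List.mem_dedup.mp (hm₂ ▸ ha)
                simp [ha']
            | succ E' =>
                exfalso
                rw [List.drop_succ_cons] at hb
                have : b ∈ v' := (List.drop_sublist _ _).subset hb
                rw [← hcb] at this
                exact hm this
        | cons c' m₁' =>
            rw [List.cons_append] at h
            injection h with h1 h2
            cases E with
            | zero =>
                have ha' : a ∈ v' := List.mem_dedup.mp (by rw [h2]; simp [ha])
                simp [ha']
            | succ E' =>
                rw [List.drop_succ_cons] at hb ⊢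
                exact ih m₁' m₂ b a h2 ha E' hb

lemma filter_suffix {l : List A} {Q : A → Bool}
    (H : ∀ l₁ a l₂, l = l₁ ++ a :: l₂ → Q a = true → ∀ b ∈ l₂, Q b = true) :
    l.filter Q <:+ l := by
  induction l with
  | nil => simp
  | cons c l' ih =>
      by_cases hc : Q c = true
      · have hall : ∀ b ∈ l', Q b = true := H [] c l' rfl hc
        rw [List.filter_cons_of_pos hc, List.filter_eq_self.mpr hall]
      · rw [List.filter_cons_of_neg hc]
        have H' : ∀ l₁ a l₂, l' = l₁ ++ a :: l₂ → Q a = true → ∀ b ∈ l₂, Q b = true := by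
          intro l₁ a l₂ he
          exact H (c :: l₁) a l₂ (by simp [he])
        exact (ih H').trans (List.suffix_cons c l')

lemma mem_take_iff_rev {u : List A} {d : ℕ} (hd : d ≤ u.length) (x : A) :
    x ∈ u.take d ↔ x ∈ u.reverse.drop (u.length - d) := by
  rw [← List.reverse_take, List.mem_reverse]

lemma eWord_filter_suffix (u : List A) (d : ℕ) (hd : d ≤ u.length) :
    (eWord u).filter (fun a => decide (a ∉ u.take d)) <:+ eWord u := by
  apply filter_suffix
  intro l₁ a l₂ he hQa b hb
  simp only [decide_eq_true_eq] at hQa ⊢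
  intro hbmem
  apply hQa
  have hr : u.reverse.dedup = l₂.reverse ++ a :: l₁.reverse := by
    have h1 : (eWord u).reverse = u.reverse.dedup := by rw [eWord, List.reverse_reverse]
    rw [← h1, he]
    simp
  obtain ⟨n₁, n₂, hsplit⟩ := List.append_of_mem (List.mem_reverse.mpr hb)
  have hr2 : u.reverse.dedup = n₁ ++ b :: (n₂ ++ a :: l₁.reverse) := by
    rw [hr, hsplit]; simp
  have ha2 : a ∈ n₂ ++ a :: l₁.reverse := by simp
  have hres := dedup_order u.reverse _ _ b a hr2 ha2 (u.length - d)
    ((mem_take_iff_rev hd b).mp hbmem)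
  exact (mem_take_iff_rev hd a).mpr hres

end EW

section Main
variable {A : Type*} [Fintype A] [DecidableEq A]

open Classical in
lemma conj_le [Nonempty A] (u : List A) (i : ℕ) :
    univIndex (u.drop i ++ u.take i) ≤ univIndex u + 1 := by
  set s := u.drop i with hs
  set p := u.take i with hp
  set w' := s ++ p with hw'
  set K := univIndex w' with hK
  rcases Nat.eq_zero_or_pos K with h0 | hpos
  · omega
  have hU : ∀ z : List A, z.length = K → z.Sublist w' :=
    fun z hz => le_univIndex_iff.mp le_rfl z hz
  have hsome := univ_to_arch K 0 (by simpa using hU)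
  obtain ⟨qK, hqK⟩ := Option.isSome_iff_exists.mp hsome
  set b := s.length with hb
  set P : ℕ → Prop := fun j => ∃ q, alphaIter w' j 0 = some q ∧ q ≤ b with hP
  set t := Nat.findGreatest P K with ht
  have hP0 : P 0 := ⟨0, iter_zero _ _, Nat.zero_le _⟩
  obtain ⟨qt, hqt, hqtb⟩ := Nat.findGreatest_spec (Nat.zero_le K) hP0
  have htK : t ≤ K := Nat.findGreatest_le K
  have hsu : s.Sublist u := by rw [hs]; exact List.drop_sublist _ _
  have hsubs : ∀ z : List A, z.length ≤ t → z.Sublist s := by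
    intro z hz
    have h1 := arch_to_univ t 0 qt hqt z hz
    rw [List.drop_zero, List.take_append_of_le_length hqtb] at h1
    exact h1.trans (List.take_sublist _ _)
  by_cases hcase : t = K
  · have : K ≤ univIndex u :=
      le_univIndex_iff.mpr fun z hz => ((hsubs z (by omega)).trans hsu)
    omega
  · have htK' : t < K := lt_of_le_of_ne htK hcase
    obtain ⟨qt1, hqt1⟩ := iter_le_some hqK (show t+1 ≤ K by omega)
    have hqt1b : b < qt1 := by
      by_contra hc
      push_neg at hc
      exact Nat.findGreatest_is_greatest (show Nat.findGreatest P K < t + 1 by omega)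
        (by omega) ⟨qt1, hqt1, hc⟩
    have hrest : alphaIter w' (K - (t+1)) qt1 = some qK := by
      have h2 := iter_add hqt1 (K - (t+1))
      rw [show (t+1) + (K - (t+1)) = K by omega, hqK] at h2
      exact h2.symm
    have hsubp : ∀ z : List A, z.length ≤ K - (t+1) → z.Sublist p := by
      intro z hz
      have h1 := arch_to_univ' hrest hz
      have h2 : w'.drop qt1 = p.drop (qt1 - b) := drop_append_ge (by omega)
      rw [h2] at h1
      exact h1.trans (List.drop_sublist _ _)
    have hfinal : K - 1 ≤ univIndex u := by
      rw [le_univIndex_iff]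
      intro z hz
      have h1 : (z.take (K - (t+1))).Sublist p := hsubp _ (by simp [List.length_take])
      have h2 : (z.drop (K - (t+1))).Sublist s := hsubs _ (by simp [List.length_drop]; omega)
      have h3 := h1.append h2
      rw [List.take_append_drop] at h3
      have hu : p ++ s = u := List.take_append_drop i u
      rwa [hu] at h3
    omega

lemma circIndex_le [Nonempty A] (u : List A) : circIndex u ≤ univIndex u + 1 :=
  Finset.sup_le fun i _ => conj_le u i

lemma univIndex_le_circIndex (u : List A) : univIndex u ≤ circIndex u := by
  have h2 : univIndex (u.drop 0 ++ u.take 0) ≤ circIndex u :=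
    Finset.le_sup (f := fun i => univIndex (u.drop i ++ u.take i))
      (Finset.mem_range.mpr (Nat.succ_pos _))
  simpa using h2

lemma part2 [Nonempty A] {u : List A} {m : ℕ} (hA : ∀ a : A, a ∈ u)
    {x : List A} (hsuf : x <:+ eWord u) (hne : x ≠ eWord u)
    (hxu : univIndex (x ++ u) = m + 1)
    (hrest : ∀ a ∈ x, a ∈ archRest (x ++ u)) :
    m + 1 ≤ circIndex u := by
  set w := x ++ u with hw
  have hna : numArches w = m + 1 := by rw [numArches_eq_univIndex, hxu]
  obtain ⟨hsome, -⟩ := numArches_spec w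
  rw [hna] at hsome
  obtain ⟨qS, hqS⟩ := Option.isSome_iff_exists.mp hsome
  have hrest' : archRest w = w.drop qS := by rw [archRest, hna, hqS]; rfl
  obtain ⟨q₁, hq₁⟩ := iter_le_some hqS (show 1 ≤ m+1 by omega)
  have haj : alphaJump w 0 = some q₁ := by
    rw [iter_succ, iter_zero, Option.bind_some] at hq₁; exact hq₁
  have hmid : alphaIter w m q₁ = some qS := by
    have h2 := iter_add hq₁ m
    rw [show 1 + m = m + 1 by omega, hqS] at h2
    exact h2.symm
  have hxlt : x.length < Fintype.card A := by
    have hlen : x.length ≤ (eWord u).length := hsuf.length_le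
    have hnee : x.length ≠ (eWord u).length := fun hc => hne (hsuf.eq_of_length hc)
    rw [eWord_length hA] at hlen hnee
    omega
  have hq₁A : Fintype.card A ≤ q₁ := by
    have hr : RichF w 0 q₁ := (aj_spec haj).1
    have hall : ∀ a : A, a ∈ w.take q₁ := fun a => by have := hr a; simpa using this
    have h3 := card_le_length hall
    have h4 : (w.take q₁).length ≤ q₁ := by simp [List.length_take]
    omega
  have hxq₁ : x.length < q₁ := by omega
  have hq₁qS : q₁ ≤ qS := by have := iter_mono_pos hmid; omega
  have hqSlen : qS ≤ w.length := iter_le_len (Nat.zero_le _) hqS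
  set j := qS - x.length with hj
  have hwlen : w.length = x.length + u.length := by simp [hw]
  have hjlen : j ≤ u.length := by omega
  have hdrop : w.drop qS = u.drop j := drop_append_ge (by omega)
  have hconj : m + 1 ≤ univIndex (u.drop j ++ u.take j) := by
    rw [le_univIndex_iff]
    intro z hz
    cases z with
    | nil => simp at hz
    | cons a z' =>
      have hz' : z'.length ≤ m := by simp at hz; omega
      have h2 : z'.Sublist ((w.take qS).drop q₁) := arch_to_univ m q₁ qS hmid z' hz'
      have he1 : w.take qS = x ++ u.take j := take_append_ge (by omega)
      have he2 : (w.take qS).drop q₁ = (u.take j).drop (q₁ - x.length) := by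
        rw [he1, drop_append_ge (le_of_lt hxq₁)]
      rw [he2] at h2
      have ha : a ∈ u.drop j ++ (u.take j).take (q₁ - x.length) := by
        have hr := (aj_spec haj).1 a
        rw [List.drop_zero, take_append_ge (le_of_lt hxq₁)] at hr
        rcases List.mem_append.mp hr with hax | hau
        · exact List.mem_append.mpr (Or.inl (by rw [← hdrop, ← hrest']; exact hrest a hax))
        · refine List.mem_append.mpr (Or.inr ?_)
          rwa [List.take_take, min_eq_left (by omega)]
      have hfin := (List.singleton_sublist.mpr ha).append h2
      have heq : (u.drop j ++ (u.take j).take (q₁ - x.length)) ++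
          (u.take j).drop (q₁ - x.length) = u.drop j ++ u.take j := by
        rw [List.append_assoc, List.take_append_drop]
      rw [heq] at hfin
      exact hfin
  calc m + 1 ≤ univIndex (u.drop j ++ u.take j) := hconj
    _ ≤ circIndex u := Finset.le_sup (f := fun i => univIndex (u.drop i ++ u.take i))
        (Finset.mem_range.mpr (by omega))

open Classical in
lemma part3 [Nonempty A] {u : List A} {m : ℕ} (hA : ∀ a : A, a ∈ u)
    (hm : univIndex u = m) (hz : circIndex u = m + 1) :
    ∃ x : List A, x <:+ eWord u ∧ x ≠ eWord u ∧
      univIndex (x ++ u) = m + 1 ∧ ∀ a ∈ x, a ∈ archRest (x ++ u) := by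
  obtain ⟨i, hi, hival⟩ := Finset.exists_mem_eq_sup (Finset.range (u.length + 1))
    ⟨0, Finset.mem_range.mpr (Nat.succ_pos _)⟩
    (fun i => univIndex (u.drop i ++ u.take i))
  rw [circIndex] at hz
  have hKi : univIndex (u.drop i ++ u.take i) = m + 1 := by rw [← hival]; exact hz
  set s := u.drop i with hs
  set p := u.take i with hp
  set w' := s ++ p with hw'
  set b := s.length with hb
  have hups : p ++ s = u := List.take_append_drop i u
  have hw'len : w'.length = b + p.length := by simp [hw', hb]
  have hple : p.length ≤ u.length := by rw [hp]; simp [List.length_take]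
  -- arch data of w'
  have hU : ∀ z : List A, z.length = m + 1 → z.Sublist w' :=
    fun z hzz => le_univIndex_iff.mp (le_of_eq hKi.symm) z hzz
  have hsome := univ_to_arch (m+1) 0 (by simpa using hU)
  obtain ⟨qK, hqK⟩ := Option.isSome_iff_exists.mp hsome
  set P : ℕ → Prop := fun j => ∃ q, alphaIter w' j 0 = some q ∧ q ≤ b with hP
  haveI : DecidablePred P := Classical.decPred P
  set t := Nat.findGreatest P (m+1) with ht
  have hP0 : P 0 := ⟨0, iter_zero _ _, Nat.zero_le _⟩
  obtain ⟨qt, hqt, hqtb⟩ := Nat.findGreatest_spec (P := P) (Nat.zero_le (m+1)) hP0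
  have htK : t ≤ m + 1 := Nat.findGreatest_le _
  have hsubs : ∀ z : List A, z.length ≤ t → z.Sublist (s.take qt) := by
    intro z hzz
    have h1 := arch_to_univ t 0 qt hqt z hzz
    rwa [List.drop_zero, List.take_append_of_le_length hqtb] at h1
  have htm : t ≤ m := by
    by_contra hc
    have h1 : m + 1 ≤ univIndex u := le_univIndex_iff.mpr fun z hzz =>
      ((hsubs z (by omega)).trans (List.take_sublist _ _)).trans (List.drop_sublist _ _)
    omega
  obtain ⟨qt1, hqt1⟩ := iter_le_some hqK (show t + 1 ≤ m + 1 by omega)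
  have hajt : alphaJump w' qt = some qt1 := by
    have h1 := iter_add hqt 1
    have h2 : alphaIter w' 1 qt = alphaJump w' qt := by
      rw [iter_succ, iter_zero, Option.bind_some]
    rw [h2] at h1
    rw [← h1]
    exact hqt1
  have hqt1b : b < qt1 := by
    by_contra hc
    push_neg at hc
    exact Nat.findGreatest_is_greatest (show Nat.findGreatest P (m+1) < t + 1 by omega)
      (by omega) ⟨qt1, hqt1, hc⟩
  have hqt1len : qt1 ≤ w'.length := aj_le_len hajt
  set d := qt1 - b with hd
  have hd1 : 1 ≤ d := by omega
  have hdp : d ≤ p.length := by omega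
  have hdu : d ≤ u.length := by omega
  have hutake : u.take d = p.take d := by
    rw [← hups]; exact List.take_append_of_le_length hdp
  -- the witness x
  set x := (eWord u).filter (fun a => decide (a ∉ u.take d)) with hx
  have hsuf : x <:+ eWord u := eWord_filter_suffix u d hdu
  have hxmem1 : ∀ a : A, a ∉ u.take d → a ∈ x := fun a ha => by
    rw [hx, List.mem_filter]
    exact ⟨mem_eWord.mpr (hA a), by simpa using ha⟩
  have hxmem2 : ∀ a ∈ x, a ∉ u.take d := fun a ha => by
    rw [hx, List.mem_filter] at ha
    simpa using ha.2
  have hune : u ≠ [] := by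
    obtain ⟨a⟩ := ‹Nonempty A›
    exact List.ne_nil_of_mem (hA a)
  have hne : x ≠ eWord u := by
    intro hc
    obtain ⟨c, u', hcu⟩ := List.exists_cons_of_ne_nil hune
    have hctake : c ∈ u.take d := by
      obtain ⟨d', hd'⟩ := Nat.exists_eq_add_of_le hd1
      rw [hcu, hd', Nat.add_comm 1 d', List.take_succ_cons]
      exact List.mem_cons_self
    have hcx : c ∈ x := by rw [hc]; exact mem_eWord.mpr (by rw [hcu]; simp)
    exact hxmem2 c hcx hctake
  -- straddling arch richness
  have hstr : ∀ a : A, a ∈ s.drop qt ++ p.take d := by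
    intro a
    have h1 := (aj_spec hajt).1 a
    rw [take_append_ge (show s.length ≤ qt1 by omega)] at h1
    have hdd : qt1 - s.length = d := by omega
    rw [hdd, List.drop_append_of_le_length (by omega : qt ≤ s.length)] at h1
    exact h1
  have hsdx : ∀ a ∈ x, a ∈ s.drop qt := by
    intro a ha
    rcases List.mem_append.mp (hstr a) with h1 | h1
    · exact h1
    · exact absurd (hutake ▸ h1) (hxmem2 a ha)
  -- rest-arch data for blocks beyond the straddling arch
  have hmidrest : alphaIter w' (m - t) qt1 = some qK := by
    have h2 := iter_add hqt1 (m - t)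
    rw [show (t + 1) + (m - t) = m + 1 by omega, hqK] at h2
    exact h2.symm
  have hqt1qK : qt1 ≤ qK := by have := iter_mono_pos hmidrest; omega
  have hsub2 : ∀ z : List A, z.length ≤ m - t → z.Sublist (p.drop d) := by
    intro z hzz
    have h1 := arch_to_univ (m - t) qt1 qK hmidrest z hzz
    rw [take_append_ge (show s.length ≤ qK by omega),
      drop_append_ge (show s.length ≤ qt1 by omega)] at h1
    have hdd : qt1 - s.length = d := by omega
    rw [hdd] at h1
    exact h1.trans (take_drop_sublist_drop p d (qK - s.length))
  -- universality of the prefix V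
  set V := x ++ (p ++ s.take qt) with hV
  have hVV' : V ++ s.drop qt = x ++ u := by
    rw [hV, List.append_assoc, List.append_assoc, List.take_append_drop, hups]
  have hUV : ∀ z : List A, z.length = m + 1 → z.Sublist V := by
    intro z hzz
    cases z with
    | nil => simp at hzz
    | cons a z'' =>
      have hzlen : z''.length = m := by simpa using hzz
      have h1 : List.Sublist [a] (x ++ p.take d) := by
        rw [List.singleton_sublist]
        by_cases hmem : a ∈ u.take d
        · exact List.mem_append.mpr (Or.inr (hutake ▸ hmem))
        · exact List.mem_append.mpr (Or.inl (hxmem1 a hmem))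
      have h2 : (z''.take (m - t)).Sublist (p.drop d) :=
        hsub2 _ (by simp [List.length_take])
      have h3 : (z''.drop (m - t)).Sublist (s.take qt) :=
        hsubs _ (by simp [List.length_drop]; omega)
      have h4 := (h1.append h2).append h3
      have hL : (([a] ++ z''.take (m - t)) ++ z''.drop (m - t)) = a :: z'' := by
        rw [List.append_assoc, List.take_append_drop]
        rfl
      have hR : (((x ++ p.take d) ++ p.drop d) ++ s.take qt) = V := by
        rw [List.append_assoc x, List.take_append_drop, List.append_assoc]
      rw [hL, hR] at h4
      exact h4
  have hUxu : ∀ z : List A, z.length = m + 1 → z.Sublist (x ++ u) := by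
    intro z hzz
    have h1 := (hUV z hzz).trans (List.sublist_append_left V (s.drop qt))
    rwa [hVV'] at h1
  -- univIndex (x ++ u) = m + 1
  have hxcard : x.length ≤ Fintype.card A := by
    have h1 : x.Nodup := (eWord_nodup u).filter _
    calc x.length = x.toFinset.card := (List.toFinset_card_of_nodup h1).symm
      _ ≤ Fintype.card A := Finset.card_le_univ _
  have hxu : univIndex (x ++ u) = m + 1 := by
    refine le_antisymm ?_ (le_univIndex_iff.mpr hUxu)
    have h1 := univIndex_prepend_le (u := u) hxcard
    omega
  -- archRest condition via the greedy bound
  have hVsome : (alphaIter V (m+1) 0).isSome :=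
    univ_to_arch (m+1) 0 (by intro z hzz; simpa using hUV z hzz)
  obtain ⟨qG, qv, hqG, hqv, hle⟩ := greedy_le (V' := s.drop qt) hVsome
  have hqvlen : qv ≤ V.length := iter_le_len (Nat.zero_le _) hqv
  have hqG' : alphaIter (x ++ u) (m+1) 0 = some qG := by rwa [hVV'] at hqG
  have hnax : numArches (x ++ u) = m + 1 := by rw [numArches_eq_univIndex, hxu]
  have hAR : archRest (x ++ u) = (x ++ u).drop qG := by rw [archRest, hnax, hqG']; rfl
  have hdropV : (x ++ u).drop V.length = s.drop qt := by
    rw [← hVV']; exact List.drop_left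
  refine ⟨x, hsuf, hne, hxu, ?_⟩
  intro a ha
  rw [hAR]
  have h1 : a ∈ (x ++ u).drop V.length := by rw [hdropV]; exact hsdx a ha
  exact mem_drop_mono (by omega) h1

end Main


/-- Let `u` be a word over its own alphabet `A = A(u)` (every letter of `A` occurs in `u`)
with `ι(u) = m`. Then `ζ(u) = m + 1` iff there is a strict suffix `x` of `e(u)` with
`ι(x·u) = m + 1` and every letter of `x` occurring in `r(x·u)`; otherwise `ζ(u) = m`. -/
theorem circIndex_from_signature {A : Type*} [Fintype A] [DecidableEq A]
    (u : List A) (m : ℕ) (hA : ∀ a : A, a ∈ u) (hm : univIndex u = m) :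
    (circIndex u = m + 1 ↔
      ∃ x : List A, x <:+ eWord u ∧ x ≠ eWord u ∧
        univIndex (x ++ u) = m + 1 ∧ ∀ a ∈ x, a ∈ archRest (x ++ u)) ∧
    ((¬ ∃ x : List A, x <:+ eWord u ∧ x ≠ eWord u ∧
        univIndex (x ++ u) = m + 1 ∧ ∀ a ∈ x, a ∈ archRest (x ++ u)) →
      circIndex u = m) := by
  rcases isEmpty_or_nonempty A with hE | hNE
  · have hu : u = [] := by
      cases u with
      | nil => rfl
      | cons a _ => exact hE.elim a
    subst hu
    have hm0 : m = 0 := by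
      rw [← hm, univIndex]
      have hset : {k : ℕ | ∀ w : List A, w.length = k → w.Sublist ([] : List A)} =
          Set.univ := by
        ext k
        simp only [Set.mem_setOf_eq, Set.mem_univ, iff_true]
        intro z _
        cases z with
        | nil => exact List.Sublist.refl _
        | cons a _ => exact hE.elim a
      rw [hset]
      exact Set.Infinite.Nat.sSup_eq_zero Set.infinite_univ
    subst hm0
    have hcirc : circIndex ([] : List A) = 0 := by
      rw [circIndex]
      simp only [List.length_nil, Nat.zero_add, Finset.range_one, Finset.sup_singleton,
        List.drop_nil, List.take_nil, List.nil_append]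
      exact hm
    have hnex : ¬ ∃ x : List A, x <:+ eWord ([] : List A) ∧ x ≠ eWord ([] : List A) ∧
        univIndex (x ++ []) = 0 + 1 ∧ ∀ a ∈ x, a ∈ archRest (x ++ []) := by
      rintro ⟨x, hsuf, hne, -, -⟩
      have hE0 : eWord ([] : List A) = [] := rfl
      rw [hE0] at hsuf hne
      exact hne (List.suffix_nil.mp hsuf)
    refine ⟨⟨fun h => absurd (hcirc ▸ h) (by omega), fun hex => absurd hex hnex⟩,
      fun _ => hcirc⟩
  · have h1 : circIndex u ≤ m + 1 := by
      have := circIndex_le u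
      omega
    have h2 : m ≤ circIndex u := hm ▸ univIndex_le_circIndex u
    constructor
    · constructor
      · exact fun h => part3 hA hm h
      · rintro ⟨x, hsuf, hne, hxu, hrest⟩
        have h3 := part2 hA hsuf hne hxu hrest
        omega
    · intro hnex
      by_contra hc
      have hzz : circIndex u = m + 1 := by omega
      exact hnex (part3 hA hm hzz)
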